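/- The functors Lind_⊕ and BVal form a Galois connection between the preorder of sets of bivaluations and the rexpansion preorder of PNmatrices: for every ⟨Σ, B⟩ (B ⊆ BVal(Σ) closed under substitutions) and every PNmatrix ⟨Σ₀, M₀⟩, one has Lind_⊕(⟨Σ, B⟩) ⊑ ⟨Σ₀, M₀⟩ if and only if ⟨Σ, B⟩ ⊑ BVal(⟨Σ₀, M₀⟩). -/

import Mathlib

set_option autoImplicit false

namespace Paper

/-- Formulas over a signature: `C` is a universe of connective symbols with
arities `ar`, and a signature is a set `S` of connectives.  Variables are
indexed by `ℕ` (a countably infinite set). -/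
inductive Fm (C : Type) (ar : C → ℕ) (S : Set C) : Type
  | var : ℕ → Fm C ar S
  | app : (c : C) → c ∈ S → (Fin (ar c) → Fm C ar S) → Fm C ar S

variable {C : Type} {ar : C → ℕ}

/-- Application of a substitution. -/
def subst {S : Set C} (σ : ℕ → Fm C ar S) : Fm C ar S → Fm C ar S
  | .var n => σ n
  | .app c h args => .app c h (fun i => subst σ (args i))

/-- Embedding of formulas along a signature inclusion. -/
def emb {S0 S : Set C} (hS : S0 ⊆ S) : Fm C ar S0 → Fm C ar S
  | .var n => .var n
  | .app c h args => .app c (hS h) (fun i => emb hS (args i))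

theorem unionLeft {S1 S2 : Set C} : S1 ⊆ S1 ∪ S2 := Set.subset_union_left
theorem unionRight {S1 S2 : Set C} : S2 ⊆ S1 ∪ S2 := Set.subset_union_right

/-- Single-conclusion (Tarskian) consequence relation: reflexivity,
monotonicity, transitivity (cut) and substitution invariance. -/
def IsSC {S : Set C} (L : Set (Fm C ar S) → Fm C ar S → Prop) : Prop :=
  (∀ Γ A, A ∈ Γ → L Γ A) ∧
  (∀ Γ Γ' A, Γ ⊆ Γ' → L Γ A → L Γ' A) ∧
  (∀ Γ Δ A, (∀ B ∈ Δ, L Γ B) → L (Γ ∪ Δ) A → L Γ A) ∧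
  (∀ σ Γ A, L Γ A → L (subst σ '' Γ) (subst σ A))

/-- Compactness of a single-conclusion relation. -/
def CompactSC {S : Set C} (L : Set (Fm C ar S) → Fm C ar S → Prop) : Prop :=
  ∀ Γ A, L Γ A → ∃ Γ0, Γ0 ⊆ Γ ∧ Γ0.Finite ∧ L Γ0 A

/-- Image of a single-conclusion relation along a signature inclusion. -/
def embRelSC {S0 S : Set C} (hS : S0 ⊆ S)
    (L : Set (Fm C ar S0) → Fm C ar S0 → Prop) :
    Set (Fm C ar S) → Fm C ar S → Prop :=
  fun Γ A => ∃ Γ0 A0, L Γ0 A0 ∧ Γ = emb hS '' Γ0 ∧ A = emb hS A0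

/-- `L` is the least single-conclusion logic containing `Base`. -/
def LeastSC {S : Set C} (Base L : Set (Fm C ar S) → Fm C ar S → Prop) : Prop :=
  IsSC L ∧ (∀ Γ A, Base Γ A → L Γ A) ∧
  (∀ L', IsSC L' → (∀ Γ A, Base Γ A → L' Γ A) → ∀ Γ A, L Γ A → L' Γ A)

/-- `L` is the combination (fibring) of the single-conclusion logics
`L1`, `L2`: the least single-conclusion logic over `S1 ∪ S2` extending both. -/
def IsCombSC {S1 S2 : Set C}
    (L1 : Set (Fm C ar S1) → Fm C ar S1 → Prop)
    (L2 : Set (Fm C ar S2) → Fm C ar S2 → Prop)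
    (L : Set (Fm C ar (S1 ∪ S2)) → Fm C ar (S1 ∪ S2) → Prop) : Prop :=
  LeastSC (fun Γ A => embRelSC unionLeft L1 Γ A ∨ embRelSC unionRight L2 Γ A) L

/-- Multiple-conclusion consequence relation: overlap, dilution,
cut for sets, substitution invariance. -/
def IsMC {S : Set C} (Cn : Set (Fm C ar S) → Set (Fm C ar S) → Prop) : Prop :=
  (∀ Γ Δ, (Γ ∩ Δ).Nonempty → Cn Γ Δ) ∧
  (∀ Γ Δ Γ' Δ', Cn Γ Δ → Cn (Γ ∪ Γ') (Δ ∪ Δ')) ∧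
  (∀ Γ Δ (Ω : Set (Fm C ar S)),
    (∀ Ω1 Ω2, Ω1 ∪ Ω2 = Ω → Ω1 ∩ Ω2 = ∅ → Cn (Γ ∪ Ω1) (Ω2 ∪ Δ)) → Cn Γ Δ) ∧
  (∀ σ Γ Δ, Cn Γ Δ → Cn (subst σ '' Γ) (subst σ '' Δ))

def embRelMC {S0 S : Set C} (hS : S0 ⊆ S)
    (Cn : Set (Fm C ar S0) → Set (Fm C ar S0) → Prop) :
    Set (Fm C ar S) → Set (Fm C ar S) → Prop :=
  fun Γ Δ => ∃ Γ0 Δ0, Cn Γ0 Δ0 ∧ Γ = emb hS '' Γ0 ∧ Δ = emb hS '' Δ0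

def LeastMC {S : Set C} (Base Cn : Set (Fm C ar S) → Set (Fm C ar S) → Prop) : Prop :=
  IsMC Cn ∧ (∀ Γ Δ, Base Γ Δ → Cn Γ Δ) ∧
  (∀ Cn', IsMC Cn' → (∀ Γ Δ, Base Γ Δ → Cn' Γ Δ) → ∀ Γ Δ, Cn Γ Δ → Cn' Γ Δ)

def IsCombMC {S1 S2 : Set C}
    (C1 : Set (Fm C ar S1) → Set (Fm C ar S1) → Prop)
    (C2 : Set (Fm C ar S2) → Set (Fm C ar S2) → Prop)
    (Cn : Set (Fm C ar (S1 ∪ S2)) → Set (Fm C ar (S1 ∪ S2)) → Prop) : Prop :=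
  LeastMC (fun Γ Δ => embRelMC unionLeft C1 Γ Δ ∨ embRelMC unionRight C2 Γ Δ) Cn

/-- Multiple-conclusion relation determined by a set of bivaluations. -/
def mcBiv {S : Set C} (B : Set (Fm C ar S → Prop)) :
    Set (Fm C ar S) → Set (Fm C ar S) → Prop :=
  fun Γ Δ => ∀ b ∈ B, (∃ A ∈ Γ, ¬ b A) ∨ (∃ A ∈ Δ, b A)

/-- Single-conclusion relation determined by a set of bivaluations. -/
def scBiv {S : Set C} (B : Set (Fm C ar S → Prop)) :
    Set (Fm C ar S) → Fm C ar S → Prop :=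
  fun Γ A => ∀ b ∈ B, (∀ B' ∈ Γ, b B') → b A

/-- A set of bivaluations is closed under substitutions. -/
def SubstClosed {S : Set C} (B : Set (Fm C ar S → Prop)) : Prop :=
  ∀ b ∈ B, ∀ σ : ℕ → Fm C ar S, (fun A => b (subst σ A)) ∈ B

/-- Meet-closure of a set of bivaluations. -/
def meetCl {S : Set C} (B : Set (Fm C ar S → Prop)) : Set (Fm C ar S → Prop) :=
  {b | ∃ X, X ⊆ B ∧ b = fun A => ∀ b' ∈ X, b' A}

/-- A skeleton bijection for a signature inclusion `S0 ⊆ S`: it commutes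
with `S0`-connectives and it maps variables and monoliths to variables. -/
structure Skel (ar : C → ℕ) {S0 S : Set C} (hS : S0 ⊆ S) where
  toFun : Fm C ar S → Fm C ar S0
  bij : Function.Bijective toFun
  comm : ∀ (c : C) (hc : c ∈ S0) (args : Fin (ar c) → Fm C ar S),
    toFun (.app c (hS hc) args) = .app c hc (fun i => toFun (args i))
  mono : ∀ (c : C) (hc : c ∈ S) (args : Fin (ar c) → Fm C ar S),
    c ∉ S0 → ∃ n, toFun (.app c hc args) = .var n
  var : ∀ n : ℕ, ∃ m : ℕ, toFun (.var n) = .var m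

/-- Extension of a set of bivaluations along the skeleton map. -/
def extBiv {S0 S : Set C} {hS : S0 ⊆ S} (sk : Skel ar hS)
    (B : Set (Fm C ar S0 → Prop)) : Set (Fm C ar S → Prop) :=
  {b | ∃ b0 ∈ B, b = fun A => b0 (sk.toFun A)}

/-- Partial non-deterministic matrices (PNmatrices). -/
structure PN (C : Type) (ar : C → ℕ) (S : Set C) where
  V : Type
  D : Set V
  tbl : ∀ c : C, c ∈ S → (Fin (ar c) → V) → Set V

/-- Valuations of a PNmatrix. -/
def IsVal {S : Set C} (M : PN C ar S) (v : Fm C ar S → M.V) : Prop :=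
  ∀ (c : C) (h : c ∈ S) (args : Fin (ar c) → Fm C ar S),
    v (.app c h args) ∈ M.tbl c h (fun i => v (args i))

/-- Bivaluations induced by a PNmatrix. -/
def BVal {S : Set C} (M : PN C ar S) : Set (Fm C ar S → Prop) :=
  {b | ∃ v, IsVal M v ∧ b = fun A => v A ∈ M.D}

def scPN {S : Set C} (M : PN C ar S) : Set (Fm C ar S) → Fm C ar S → Prop :=
  scBiv (BVal M)

def mcPN {S : Set C} (M : PN C ar S) : Set (Fm C ar S) → Set (Fm C ar S) → Prop :=
  mcBiv (BVal M)

/-- Extension of a PNmatrix to a larger signature: new connectives are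
interpreted fully non-deterministically. -/
def extPN {S0 S : Set C} (hS : S0 ⊆ S) (M : PN C ar S0) : PN C ar S where
  V := M.V
  D := M.D
  tbl c _ args := {y | ∀ hc : c ∈ S0, y ∈ M.tbl c hc args}

/-- Strict product of two PNmatrices. -/
def sprod {S1 S2 : Set C} (M1 : PN C ar S1) (M2 : PN C ar S2) :
    PN C ar (S1 ∪ S2) where
  V := {p : M1.V × M2.V // p.1 ∈ M1.D ↔ p.2 ∈ M2.D}
  D := {p | p.val.1 ∈ M1.D ∧ p.val.2 ∈ M2.D}
  tbl c _ args :=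
    {p | (∀ hc : c ∈ S1, p.val.1 ∈ M1.tbl c hc (fun i => (args i).val.1)) ∧
         (∀ hc : c ∈ S2, p.val.2 ∈ M2.tbl c hc (fun i => (args i).val.2))}

/-- Theories of a single-conclusion relation. -/
def IsTheorySC {S : Set C} (L : Set (Fm C ar S) → Fm C ar S → Prop)
    (Γ : Set (Fm C ar S)) : Prop :=
  ∀ A, L Γ A → A ∈ Γ

/-- A PNmatrix is saturated if every consistent theory of its
single-conclusion logic is the set of designated formulas of a valuation. -/
def Saturated {S : Set C} (M : PN C ar S) : Prop :=
  ∀ Γ : Set (Fm C ar S), IsTheorySC (scPN M) Γ → Γ ≠ Set.univ →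
    ∃ v, IsVal M v ∧ Γ = {A | v A ∈ M.D}

/-- The ω-power of a PNmatrix. -/
def omegaPow {S : Set C} (M : PN C ar S) : PN C ar S where
  V := ℕ → M.V
  D := {x | ∀ i, x i ∈ M.D}
  tbl c h args := {y | ∀ i, y i ∈ M.tbl c h (fun k => args k i)}

/-- Strict homomorphisms of PNmatrices (rexpansions). -/
def IsHom {S0 S : Set C} (hS : S0 ⊆ S) (M : PN C ar S) (M0 : PN C ar S0)
    (h : M.V → M0.V) : Prop :=
  (∀ x, h x ∈ M0.D ↔ x ∈ M.D) ∧
  (∀ (c : C) (hc : c ∈ S0) (args : Fin (ar c) → M.V) (y : M.V),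
    y ∈ M.tbl c (hS hc) args → h y ∈ M0.tbl c hc (fun i => h (args i)))

/-- Sum of a family of PNmatrices over a common signature. -/
def psum {S : Set C} {I : Type} (Ms : I → PN C ar S) : PN C ar S where
  V := (i : I) × (Ms i).V
  D := {p | p.2 ∈ (Ms p.1).D}
  tbl c h args :=
    {p | ∃ xs : Fin (ar c) → (Ms p.1).V,
      (∀ k, args k = ⟨p.1, xs k⟩) ∧ p.2 ∈ (Ms p.1).tbl c h xs}

/-- Lindenbaum matrix with designated set `Γ`. -/
def lind {S : Set C} (Γ : Set (Fm C ar S)) : PN C ar S where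
  V := Fm C ar S
  D := Γ
  tbl c h args := {Fm.app c h args}

/-- Reduct of a PNmatrix to a subsignature. -/
def reduct {S0 S : Set C} (hS : S0 ⊆ S) (M : PN C ar S) : PN C ar S0 where
  V := M.V
  D := M.D
  tbl c hc := M.tbl c (hS hc)

/-- One-variable formulas (only the variable `0` occurs). -/
inductive OnlyVar0 {C : Type} {ar : C → ℕ} {S : Set C} : Fm C ar S → Prop
  | var : OnlyVar0 (.var 0)
  | app (c : C) (h : c ∈ S) (args : Fin (ar c) → Fm C ar S) :
      (∀ i, OnlyVar0 (args i)) → OnlyVar0 (.app c h args)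

/-- `S_M(x)`: values of a one-variable `S0`-formula over valuations
of `M` sending the variable to `x`. -/
def SMset {S0 S : Set C} (hS : S0 ⊆ S) (M : PN C ar S)
    (s : Fm C ar S0) (x : M.V) : Set M.V :=
  {w | ∃ v, IsVal M v ∧ v (.var 0) = x ∧ w = v (emb hS s)}

/-- `M` is `S0`-monadic. -/
def Monadic {S0 S : Set C} (hS : S0 ⊆ S) (M : PN C ar S) : Prop :=
  ∀ x y : M.V, x ≠ y → ∃ s : Fm C ar S0, OnlyVar0 s ∧
    (SMset hS M s x).Nonempty ∧ (SMset hS M s y).Nonempty ∧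
    ((SMset hS M s x ⊆ M.D ∧ SMset hS M s y ∩ M.D = ∅) ∨
     (SMset hS M s y ⊆ M.D ∧ SMset hS M s x ∩ M.D = ∅))

/-- Strict product of a PNmatrix over `S0 ⊆ S` with one over `S`
(the union of the signatures being `S`). -/
def sprodL {S0 S : Set C} (hS : S0 ⊆ S) (M1 : PN C ar S0) (M2 : PN C ar S) :
    PN C ar S where
  V := {p : M1.V × M2.V // p.1 ∈ M1.D ↔ p.2 ∈ M2.D}
  D := {p | p.val.1 ∈ M1.D ∧ p.val.2 ∈ M2.D}
  tbl c h args :=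
    {p | (∀ hc : c ∈ S0, p.val.1 ∈ M1.tbl c hc (fun i => (args i).val.1)) ∧
         p.val.2 ∈ M2.tbl c h (fun i => (args i).val.2)}

/-- All substitution instances (over `S1 ∪ S2`) of axiom schemata `Ax ⊆ Fm_{S2}`. -/
def axInst {S1 S2 : Set C} (Ax : Set (Fm C ar S2)) : Set (Fm C ar (S1 ∪ S2)) :=
  {B | ∃ A ∈ Ax, ∃ σ, B = subst σ (emb unionRight A)}

/-- The Nmatrix `M_Ax` associated to a set of axiom schemata. -/
def MAx (S1 : Set C) {S2 : Set C} (Ax : Set (Fm C ar S2)) : PN C ar (S1 ∪ S2) where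
  V := {p : Fm C ar (S1 ∪ S2) × Bool // p.1 ∈ axInst (S1 := S1) Ax → p.2 = true}
  D := {p | p.val.2 = true}
  tbl c h args := {p | p.val.1 = Fm.app c h (fun i => (args i).val.1)}


/-- `Lind_⊕` and `BVal` form a Galois connection:
`Lind_⊕(⟨Σ,B⟩) ⊑ ⟨Σ₀,M₀⟩` iff `⟨Σ,B⟩ ⊑ BVal(⟨Σ₀,M₀⟩)`. -/
theorem statement17 {C : Type} {ar : C → ℕ} {S0 S : Set C} (hS : S0 ⊆ S)
    (sk : Skel ar hS) (B : Set (Fm C ar S → Prop)) (hB : SubstClosed B)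
    (M0 : PN C ar S0) :
    (∃ h, IsHom hS
        (psum (fun b : {b : Fm C ar S → Prop // b ∈ B} => lind {A | b.1 A}))
        M0 h) ↔
      B ⊆ extBiv sk (BVal M0) := by
  constructor
  · rintro ⟨h, hD, hT⟩ b hb
    let e := Equiv.ofBijective sk.toFun sk.bij
    refine ⟨fun A0 => h ⟨⟨b, hb⟩, e.symm A0⟩ ∈ M0.D, ⟨fun A0 => h ⟨⟨b, hb⟩, e.symm A0⟩, ?_, rfl⟩, ?_⟩
    · intro c hc args0
      have hg : Fm.app c (hS hc) (fun i => e.symm (args0 i)) = e.symm (Fm.app c hc args0) := by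
        apply e.injective
        rw [e.apply_symm_apply]
        show sk.toFun _ = _
        rw [sk.comm c hc]
        congr 1
        funext i
        exact e.apply_symm_apply (args0 i)
      simp only [← hg]
      exact hT c hc _ _ ⟨fun i => e.symm (args0 i), fun k => rfl, rfl⟩
    · funext A
      show b A = (h ⟨⟨b, hb⟩, e.symm (sk.toFun A)⟩ ∈ M0.D)
      rw [show e.symm (sk.toFun A) = A from e.symm_apply_apply A]
      exact propext (hD ⟨⟨b, hb⟩, A⟩).symm
  · intro hBsub
    choose b0 hb0B hb0eq using fun b : {b : Fm C ar S → Prop // b ∈ B} => hBsub b.2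
    choose v hv hveq using hb0B
    refine ⟨fun p => v p.1 (sk.toFun p.2), ?_, ?_⟩
    · intro p
      have h1 := congrFun (hb0eq p.1) p.2
      have h2 := congrFun (hveq p.1) (sk.toFun p.2)
      show v p.1 (sk.toFun p.2) ∈ M0.D ↔ p.1.1 p.2
      rw [h1, h2]
    · rintro c hc args y ⟨xs, hxs, hy⟩
      have hy2 : y.2 = Fm.app c (hS hc) xs := hy
      show v y.1 (sk.toFun y.2) ∈
        M0.tbl c hc (fun i => v (args i).1 (sk.toFun (args i).2))
      rw [hy2, sk.comm c hc xs]
      have := hv y.1 c hc (fun i => sk.toFun (xs i))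
      convert this using 2
      funext i
      rw [hxs i]

end Paper
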